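/- Define Ω(x,y) = ∑_{n∈ℤ} max(0, 1 - |n·x - y|)² for x ≠ 0. For a fixed real x with 0 < |x| ≤ 2, the function y ↦ Ω(x,y) attains its global minimum value Ω(x, x/2), and this minimum is attained precisely when y ∈ {(n + 1/2)·|x| : n ∈ ℤ}. -/

import Mathlib

/-- `Ω(x,y) = ∑_{n∈ℤ} max(0, 1 - |n·x - y|)²`. -/
noncomputable def Omega (x y : ℝ) : ℝ := ∑' n : ℤ, (max 0 (1 - |(n : ℝ) * x - y|)) ^ 2

namespace Stmt4Aux

noncomputable def bump (t : ℝ) : ℝ := (max 0 (1 - |t|)) ^ 2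

noncomputable def psi (t : ℝ) : ℝ :=
  if 0 < t then 2 * max 0 (1 - |t|) else -(2 * max 0 (1 - |t|))

noncomputable def S (x : ℝ) : Finset ℤ := Finset.Icc (-(⌈1/x⌉)) (⌈1/x⌉ + 1)

lemma bump_eq_zero {t : ℝ} (ht : 1 ≤ |t|) : bump t = 0 := by
  simp [bump, max_eq_left (by linarith : 1 - |t| ≤ 0)]

lemma bump_neg (t : ℝ) : bump (-t) = bump t := by simp [bump]

lemma hasDerivAt_p (s : ℝ) : HasDerivAt (fun u : ℝ => (max 0 u) ^ 2) (2 * max 0 s) s := by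
  rcases lt_trichotomy s 0 with h | h | h
  · have he : (fun u : ℝ => (max 0 u) ^ 2) =ᶠ[nhds s] fun _ => (0:ℝ) := by
      filter_upwards [Iio_mem_nhds h] with u hu
      simp [max_eq_left (le_of_lt (Set.mem_Iio.mp hu))]
    have := (hasDerivAt_const s (0:ℝ)).congr_of_eventuallyEq he
    simpa [max_eq_left h.le] using this
  · subst h
    have key : HasDerivAt (fun u : ℝ => (max 0 u) ^ 2) 0 0 := by
      rw [hasDerivAt_iff_tendsto_slope]
      refine squeeze_zero_norm (a := fun z : ℝ => |z|) ?_ ?_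
      · intro z
        rcases eq_or_ne z 0 with rfl | hz
        · simp [slope]
        · have h1 : max 0 z ≤ |z| := max_le (abs_nonneg z) (le_abs_self z)
          have h2 : (max 0 z) ^ 2 ≤ |z| ^ 2 := pow_le_pow_left₀ (le_max_left 0 z) h1 2
          have h3 : slope (fun u : ℝ => (max 0 u) ^ 2) 0 z = (max 0 z)^2 / z := by
            simp [slope]; ring
          rw [h3, Real.norm_eq_abs, abs_div,
            abs_of_nonneg (by positivity : (0:ℝ) ≤ (max 0 z)^2),
            div_le_iff₀ (abs_pos.mpr hz)]
          calc (max 0 z)^2 ≤ |z|^2 := h2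
            _ = |z| * |z| := by ring
      · simpa using (continuous_abs.tendsto (0:ℝ)).mono_left nhdsWithin_le_nhds
    simpa using key
  · have he : (fun u : ℝ => (max 0 u) ^ 2) =ᶠ[nhds s] fun u => u ^ 2 := by
      filter_upwards [Ioi_mem_nhds h] with u hu
      simp [max_eq_right (le_of_lt (Set.mem_Ioi.mp hu))]
    have := (hasDerivAt_pow 2 s).congr_of_eventuallyEq he
    simp only [Nat.cast_ofNat, pow_one] at this
    rw [max_eq_right h.le]
    simpa using this

lemma hasDerivAt_bump (c y : ℝ) (h : c - y ≠ 0) :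
    HasDerivAt (fun z => bump (c - z)) (psi (c - y)) y := by
  have h1 : HasDerivAt (fun z : ℝ => c - z) (-1) y := (hasDerivAt_id y).const_sub c
  rcases h.lt_or_gt with hneg | hpos
  · have habs : HasDerivAt (fun u : ℝ => |u|) (-1) (c - y) := hasDerivAt_abs_neg hneg
    have h2 : HasDerivAt (fun z : ℝ => |c - z|) ((-1) * (-1)) y := habs.comp y h1
    have h3 : HasDerivAt (fun z : ℝ => 1 - |c - z|) (-((-1) * (-1))) y := h2.const_sub 1
    have h5 := (hasDerivAt_p (1 - |c - y|)).comp y h3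
    have : psi (c - y) = 2 * max 0 (1 - |c - y|) * (-((-1) * (-1))) := by
      rw [psi, if_neg (by linarith)]; ring
    rw [this]
    exact h5
  · have habs : HasDerivAt (fun u : ℝ => |u|) 1 (c - y) := hasDerivAt_abs_pos hpos
    have h2 : HasDerivAt (fun z : ℝ => |c - z|) (1 * (-1)) y := habs.comp y h1
    have h3 : HasDerivAt (fun z : ℝ => 1 - |c - z|) (-(1 * (-1))) y := h2.const_sub 1
    have h5 := (hasDerivAt_p (1 - |c - y|)).comp y h3
    have : psi (c - y) = 2 * max 0 (1 - |c - y|) * (-(1 * (-1))) := by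
      rw [psi, if_pos hpos]; ring
    rw [this]
    exact h5

lemma Omega_eq (x y : ℝ) : Omega x y = ∑' n : ℤ, bump ((n : ℝ) * x - y) := rfl

lemma Omega_add_int (x y : ℝ) (k : ℤ) : Omega x (y + k * x) = Omega x y := by
  rw [Omega_eq, Omega_eq]
  rw [← Equiv.tsum_eq (Equiv.subRight k) (fun n : ℤ => bump ((n : ℝ) * x - y))]
  apply tsum_congr
  intro n
  simp only [Equiv.subRight_apply]
  congr 1
  push_cast
  ring

lemma Omega_neg_y (x y : ℝ) : Omega x (-y) = Omega x y := by
  rw [Omega_eq, Omega_eq]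
  rw [← Equiv.tsum_eq (Equiv.neg ℤ) (fun n : ℤ => bump ((n : ℝ) * x - y))]
  apply tsum_congr
  intro n
  simp only [Equiv.neg_apply]
  rw [← bump_neg ((n:ℝ) * x - (-y))]
  congr 1
  push_cast
  ring

lemma Omega_neg_x (x y : ℝ) : Omega (-x) y = Omega x y := by
  rw [Omega_eq, Omega_eq]
  rw [← Equiv.tsum_eq (Equiv.neg ℤ) (fun n : ℤ => bump ((n : ℝ) * x - y))]
  apply tsum_congr
  intro n
  simp only [Equiv.neg_apply]
  congr 1
  push_cast
  ring

lemma Omega_reflect (x y : ℝ) : Omega x (x - y) = Omega x y := by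
  have h1 : x - y = -(y + (-1 : ℤ) * x) := by push_cast; ring
  rw [h1, Omega_neg_y, Omega_add_int]

lemma Omega_eq_sum {x : ℝ} (hx0 : 0 < x) {y : ℝ} (hy0 : 0 ≤ y) (hyx : y ≤ x) :
    Omega x y = ∑ n ∈ S x, bump ((n : ℝ) * x - y) := by
  rw [Omega_eq]
  apply tsum_eq_sum
  intro n hn
  simp only [S, Finset.mem_Icc, not_and_or, not_le] at hn
  have hM : (1:ℝ)/x ≤ (⌈1/x⌉ : ℝ) := Int.le_ceil _
  have hMx : 1 ≤ (⌈1/x⌉ : ℝ) * x := by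
    have h := mul_le_mul_of_nonneg_right hM hx0.le
    rw [div_mul_eq_mul_div, one_mul, div_self (ne_of_gt hx0)] at h
    exact h
  apply bump_eq_zero
  rcases hn with hn | hn
  · have hn' : (n : ℝ) ≤ -(⌈1/x⌉ : ℝ) - 1 := by
      have : n ≤ -⌈1/x⌉ - 1 := by omega
      exact_mod_cast this
    have : (n:ℝ) * x ≤ (-(⌈1/x⌉:ℝ) - 1) * x :=
      mul_le_mul_of_nonneg_right hn' hx0.le
    rw [le_abs]
    right
    nlinarith
  · have hn' : (⌈1/x⌉ : ℝ) + 2 ≤ (n : ℝ) := by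
      have : ⌈1/x⌉ + 2 ≤ n := by omega
      exact_mod_cast this
    have : ((⌈1/x⌉:ℝ) + 2) * x ≤ (n:ℝ) * x :=
      mul_le_mul_of_nonneg_right hn' hx0.le
    rw [le_abs]
    left
    nlinarith

lemma mem_S_zero {x : ℝ} (hx0 : 0 < x) : (0 : ℤ) ∈ S x := by
  have h : 0 < ⌈1/x⌉ := Int.ceil_pos.mpr (by positivity)
  simp only [S, Finset.mem_Icc]
  omega

lemma pair_nonneg {x y : ℝ} (hx0 : 0 < x) (hy1 : x/2 < y) (hy2 : y < x) (n : ℤ) :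
    0 ≤ psi ((n:ℝ)*x - y) + psi ((1 - (n:ℝ))*x - y) := by
  have hy0 : 0 < y := by linarith
  rcases le_or_gt n 0 with hn | hn
  · have hnR : (n:ℝ) ≤ 0 := by exact_mod_cast hn
    have ha : (n:ℝ)*x - y < 0 := by nlinarith
    have hb : 0 < (1 - (n:ℝ))*x - y := by nlinarith
    rw [psi, if_neg (not_lt.mpr ha.le), psi, if_pos hb]
    have hmax : max 0 (1 - |(n:ℝ)*x - y|) ≤ max 0 (1 - |(1-(n:ℝ))*x - y|) := by
      apply max_le_max le_rfl
      rw [abs_of_neg ha, abs_of_pos hb]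
      linarith
    linarith
  · have hnR : (1:ℝ) ≤ (n:ℝ) := by exact_mod_cast hn
    have ha : 0 < (n:ℝ)*x - y := by nlinarith
    have hb : (1 - (n:ℝ))*x - y < 0 := by nlinarith
    rw [psi, if_pos ha, psi, if_neg (not_lt.mpr hb.le)]
    have hmax : max 0 (1 - |(1-(n:ℝ))*x - y|) ≤ max 0 (1 - |(n:ℝ)*x - y|) := by
      apply max_le_max le_rfl
      rw [abs_of_neg hb, abs_of_pos ha]
      linarith
    linarith

lemma pair_pos {x y : ℝ} (hx2 : x ≤ 2) (hy1 : x/2 < y) (hy2 : y < x) :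
    0 < psi (((0:ℤ):ℝ)*x - y) + psi ((1 - ((0:ℤ):ℝ))*x - y) := by
  have hy0 : 0 < y := by linarith
  have e1 : ((0:ℤ):ℝ)*x - y = -y := by push_cast; ring
  have e2 : (1 - ((0:ℤ):ℝ))*x - y = x - y := by push_cast; ring
  rw [e1, e2]
  have hb : 0 < x - y := by linarith
  rw [psi, if_neg (by linarith : ¬ 0 < -y), psi, if_pos hb]
  rw [abs_of_neg (by linarith : -y < 0), abs_of_pos hb]
  have hxy1 : x - y < 1 := by linarith
  have hmax2 : max 0 (1 - (x - y)) = 1 - (x - y) := max_eq_right (by linarith)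
  have hmax1 : max 0 (1 - - -y) < 1 - (x - y) := by
    apply max_lt (by linarith)
    · simp only [neg_neg]; linarith
  rw [hmax2]
  simp only [neg_neg] at hmax1 ⊢
  linarith [hmax1]

def refl_equiv : ℤ ≃ ℤ :=
  ⟨fun n => 1 - n, fun n => 1 - n, fun n => by simp, fun n => by simp⟩

lemma sum_reindex (x : ℝ) (f : ℤ → ℝ) : ∑ n ∈ S x, f (1 - n) = ∑ n ∈ S x, f n := by
  apply Finset.sum_equiv refl_equiv
  · intro n
    simp only [S, Finset.mem_Icc, refl_equiv, Equiv.coe_fn_mk]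
    omega
  · intro n _
    rfl

lemma D_pos {x : ℝ} (hx0 : 0 < x) (hx2 : x ≤ 2) {y : ℝ} (hy : y ∈ Set.Ioo (x/2) x) :
    0 < ∑ n ∈ S x, psi ((n:ℝ)*x - y) := by
  obtain ⟨hy1, hy2⟩ := hy
  have hre : ∑ n ∈ S x, psi ((1 - (n:ℝ))*x - y) = ∑ n ∈ S x, psi ((n:ℝ)*x - y) := by
    have h := sum_reindex x (fun n : ℤ => psi ((n:ℝ)*x - y))
    rw [← h]
    apply Finset.sum_congr rfl
    intro n _
    congr 2
    push_cast
    ring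
  have hsum : (∑ n ∈ S x, psi ((n:ℝ)*x - y)) + (∑ n ∈ S x, psi ((n:ℝ)*x - y))
      = ∑ n ∈ S x, (psi ((n:ℝ)*x - y) + psi ((1 - (n:ℝ))*x - y)) := by
    rw [Finset.sum_add_distrib, hre]
  have hpos : 0 < ∑ n ∈ S x, (psi ((n:ℝ)*x - y) + psi ((1-(n:ℝ))*x - y)) := by
    apply Finset.sum_pos' (fun n _ => pair_nonneg hx0 hy1 hy2 n)
    exact ⟨0, mem_S_zero hx0, pair_pos hx2 hy1 hy2⟩
  linarith

lemma hasDerivAt_g {x : ℝ} (hx0 : 0 < x) {y : ℝ} (hy : y ∈ Set.Ioo (x/2) x) :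
    HasDerivAt (fun z => ∑ n ∈ S x, bump ((n:ℝ)*x - z))
      (∑ n ∈ S x, psi ((n:ℝ)*x - y)) y := by
  apply HasDerivAt.fun_sum
  intro n _
  apply hasDerivAt_bump
  intro hc
  obtain ⟨hy1, hy2⟩ := hy
  have hxy : (n:ℝ) * x = y := by linarith
  have h1 : (1:ℝ)/2 < (n:ℝ) := by
    have : (1/2:ℝ) * x < (n:ℝ) * x := by rw [hxy]; linarith
    exact lt_of_mul_lt_mul_right this hx0.le
  have h2 : (n:ℝ) < 1 := by
    have : (n:ℝ) * x < 1 * x := by rw [hxy]; linarith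
    exact lt_of_mul_lt_mul_right this hx0.le
  have h3 : (0:ℤ) < n := by exact_mod_cast lt_trans (by norm_num : (0:ℝ) < 1/2) h1
  have h4 : (1:ℝ) ≤ (n:ℝ) := by exact_mod_cast h3
  linarith

lemma strictMonoOn_g {x : ℝ} (hx0 : 0 < x) (hx2 : x ≤ 2) :
    StrictMonoOn (fun z => ∑ n ∈ S x, bump ((n:ℝ)*x - z)) (Set.Icc (x/2) x) := by
  apply strictMonoOn_of_deriv_pos (convex_Icc _ _)
  · apply Continuous.continuousOn
    apply continuous_finset_sum
    intro n _
    unfold bump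
    fun_prop
  · intro z hz
    rw [interior_Icc] at hz
    rw [(hasDerivAt_g hx0 hz).deriv]
    exact D_pos hx0 hx2 hz

lemma core {x : ℝ} (hx0 : 0 < x) (hx2 : x ≤ 2) {y : ℝ} (hy : y ∈ Set.Icc 0 x) :
    Omega x (x/2) ≤ Omega x y ∧ (Omega x y = Omega x (x/2) → y = x/2) := by
  obtain ⟨hy0, hyx⟩ := hy
  have hhalf0 : (0:ℝ) ≤ x/2 := by linarith
  have hhalfx : x/2 ≤ x := by linarith
  have hOg : ∀ z : ℝ, 0 ≤ z → z ≤ x →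
      Omega x z = ∑ n ∈ S x, bump ((n:ℝ)*x - z) := fun z h1 h2 => Omega_eq_sum hx0 h1 h2
  have hmono := strictMonoOn_g hx0 hx2
  -- helper: strict inequality for z in (x/2, x]
  have key : ∀ z : ℝ, x/2 < z → z ≤ x → Omega x (x/2) < Omega x z := by
    intro z h1 h2
    rw [hOg (x/2) hhalf0 hhalfx, hOg z (by linarith) h2]
    exact hmono ⟨le_rfl, hhalfx⟩ ⟨h1.le, h2⟩ h1
  rcases lt_trichotomy y (x/2) with h | h | h
  · have hrefl : Omega x y = Omega x (x - y) := (Omega_reflect x y).symm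
    have h1 : x/2 < x - y := by linarith
    have h2 : x - y ≤ x := by linarith
    have := key (x - y) h1 h2
    constructor
    · rw [hrefl]; linarith
    · intro heq; rw [hrefl] at heq; linarith
  · exact ⟨by rw [h], fun _ => h⟩
  · have := key y h hyx
    exact ⟨this.le, fun heq => by linarith⟩

lemma main_pos {x : ℝ} (hx0 : 0 < x) (hx2 : x ≤ 2) :
    (∀ y : ℝ, Omega x (x / 2) ≤ Omega x y) ∧
    (∀ y : ℝ, Omega x y = Omega x (x / 2) ↔ ∃ n : ℤ, y = ((n : ℝ) + 1 / 2) * x) := by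
  have hxne : x ≠ 0 := ne_of_gt hx0
  -- decomposition of an arbitrary y
  have decomp : ∀ y : ℝ, ∃ k : ℤ, ∃ r : ℝ, y = r + k * x ∧ 0 ≤ r ∧ r ≤ x ∧
      Omega x y = Omega x r := by
    intro y
    refine ⟨⌊y/x⌋, y - ⌊y/x⌋ * x, by ring, ?_, ?_, ?_⟩
    · have h := Int.floor_le (y/x)
      have := mul_le_mul_of_nonneg_right h hx0.le
      rw [div_mul_cancel₀ _ hxne] at this
      linarith
    · have h := Int.lt_floor_add_one (y/x)
      have := mul_le_mul_of_nonneg_right h.le hx0.le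
      rw [div_mul_cancel₀ _ hxne] at this
      nlinarith
    · have h2 := Omega_add_int x (y - ⌊y/x⌋ * x) ⌊y/x⌋
      have e : y - (⌊y/x⌋:ℝ) * x + (⌊y/x⌋:ℝ) * x = y := by ring
      rw [e] at h2
      exact h2
  constructor
  · intro y
    obtain ⟨k, r, hyr, hr0, hrx, hOm⟩ := decomp y
    rw [hOm]
    exact (core hx0 hx2 ⟨hr0, hrx⟩).1
  · intro y
    constructor
    · intro heq
      obtain ⟨k, r, hyr, hr0, hrx, hOm⟩ := decomp y
      rw [hOm] at heq
      have := (core hx0 hx2 ⟨hr0, hrx⟩).2 heq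
      exact ⟨k, by rw [hyr, this]; ring⟩
    · rintro ⟨n, rfl⟩
      have h : ((n : ℝ) + 1 / 2) * x = x / 2 + n * x := by ring
      rw [h, Omega_add_int]

end Stmt4Aux

/-- For fixed real `x` with `0 < |x| ≤ 2`, the function `y ↦ Ω(x,y)` attains its global
minimum value `Ω(x, x/2)`, exactly at the points `y = (n + 1/2)·|x|`, `n ∈ ℤ`. -/
theorem stmt_4 (x : ℝ) (hx0 : 0 < |x|) (hx2 : |x| ≤ 2) :
    (∀ y : ℝ, Omega x (x / 2) ≤ Omega x y) ∧
    (∀ y : ℝ, Omega x y = Omega x (x / 2) ↔ ∃ n : ℤ, y = ((n : ℝ) + 1 / 2) * |x|) := by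
  rcases (abs_pos.mp hx0).lt_or_gt with hneg | hpos
  · -- x < 0
    rw [abs_of_neg hneg] at hx2 ⊢
    have hpos' : 0 < -x := by linarith
    obtain ⟨H1, H2⟩ := Stmt4Aux.main_pos hpos' hx2
    have hhalf : Omega x (x / 2) = Omega (-x) (-x / 2) := by
      have e1 : Omega x (x/2) = Omega (-x) (x/2) := (Stmt4Aux.Omega_neg_x x (x/2)).symm
      have e2 : Omega (-x) (x/2) = Omega (-x) (-(x/2)) := (Stmt4Aux.Omega_neg_y (-x) (x/2)).symm
      rw [e1, e2]
      congr 1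
      ring
    constructor
    · intro y
      rw [hhalf, ← Stmt4Aux.Omega_neg_x x y]
      exact H1 y
    · intro y
      rw [hhalf, ← Stmt4Aux.Omega_neg_x x y]
      exact H2 y
  · rw [abs_of_pos hpos] at hx2 ⊢
    exact Stmt4Aux.main_pos hpos hx2
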